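/- Every even wheel W_{2k} (k ≥ 1) is ℤ₃-connected. -/

import Mathlib

/-- A finite loopless multigraph: each edge has an ordered pair of distinct endpoints
(the ordering is immaterial; it is only used to describe orientations). -/
structure Multigraph : Type 1 where
  V : Type
  fintypeV : Fintype V
  decEqV : DecidableEq V
  E : Type
  fintypeE : Fintype E
  decEqE : DecidableEq E
  ends : E → V × V
  loopless : ∀ e, (ends e).1 ≠ (ends e).2

attribute [instance] Multigraph.fintypeV Multigraph.decEqV Multigraph.fintypeE Multigraph.decEqE

namespace Multigraph

variable (G : Multigraph)

/-- Tail of an edge under an orientation `D` (`true` = directed from first to second end). -/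
def tail (D : G.E → Bool) (e : G.E) : G.V := if D e then (G.ends e).1 else (G.ends e).2

/-- Head of an edge under an orientation `D`. -/
def head (D : G.E → Bool) (e : G.E) : G.V := if D e then (G.ends e).2 else (G.ends e).1

/-- Out-degree of `v` under orientation `D`. -/
def outDeg (D : G.E → Bool) (v : G.V) : ℕ := (Finset.univ.filter fun e => G.tail D e = v).card

/-- In-degree of `v` under orientation `D`. -/
def inDeg (D : G.E → Bool) (v : G.V) : ℕ := (Finset.univ.filter fun e => G.head D e = v).card

/-- A modulo 3-orientation. -/
def HasMod3Orientation : Prop :=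
  ∃ D : G.E → Bool, ∀ v : G.V, ((G.outDeg D v : ZMod 3) = (G.inDeg D v : ZMod 3))

/-- A nowhere-zero 3-flow. -/
def HasNowhereZero3Flow : Prop :=
  ∃ (D : G.E → Bool) (f : G.E → ℤ),
    (∀ e, 1 ≤ |f e| ∧ |f e| ≤ 2) ∧
    (∀ v : G.V,
      (∑ e : G.E, if G.tail D e = v then f e else 0) =
      (∑ e : G.E, if G.head D e = v then f e else 0))

/-- `ℤ₃`-connectivity. -/
def Z3Connected : Prop :=
  ∀ b : G.V → ZMod 3, (∑ v : G.V, b v) = 0 →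
    ∃ D : G.E → Bool, ∀ v : G.V, (G.outDeg D v : ZMod 3) - (G.inDeg D v : ZMod 3) = b v

/-- Degree of a vertex. -/
def degree (v : G.V) : ℕ :=
  (Finset.univ.filter fun e => (G.ends e).1 = v ∨ (G.ends e).2 = v).card

/-- Minimum degree `δ(G)`. -/
noncomputable def minDegree : ℕ := sInf (Set.range G.degree)

/-- The edge cut `∂_G(S)`. -/
def cut (S : Finset G.V) : Finset G.E :=
  Finset.univ.filter fun e =>
    ((G.ends e).1 ∈ S ∧ (G.ends e).2 ∉ S) ∨ ((G.ends e).2 ∈ S ∧ (G.ends e).1 ∉ S)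

def Adjacent (u v : G.V) : Prop :=
  ∃ e : G.E, G.ends e = (u, v) ∨ G.ends e = (v, u)

def IsIndepSet (S : Finset G.V) : Prop :=
  ∀ u ∈ S, ∀ v ∈ S, u ≠ v → ¬ G.Adjacent u v

/-- The independence number `α(G)`. -/
noncomputable def indepNum : ℕ := sSup {n : ℕ | ∃ S : Finset G.V, G.IsIndepSet S ∧ S.card = n}

def FiveEdgeConnected : Prop :=
  ∀ S : Finset G.V, S.Nonempty → S ≠ Finset.univ → 5 ≤ (G.cut S).card

/-- Every odd edge cut has at least 5 edges. -/
def Odd5EdgeConnected : Prop :=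
  ∀ S : Finset G.V, Odd (G.cut S).card → 5 ≤ (G.cut S).card

/-- `G` contains `K₄` as a subgraph. -/
def ContainsK4 : Prop :=
  ∃ a b c d : G.V, a ≠ b ∧ a ≠ c ∧ a ≠ d ∧ b ≠ c ∧ b ≠ d ∧ c ≠ d ∧
    G.Adjacent a b ∧ G.Adjacent a c ∧ G.Adjacent a d ∧
    G.Adjacent b c ∧ G.Adjacent b d ∧ G.Adjacent c d

/-- The neighbourhood `N(X)`: vertices outside `X` with a neighbour in `X`. -/
noncomputable def neighborFinset (X : Finset G.V) : Finset G.V := by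
  classical
  exact Finset.univ.filter fun y => y ∉ X ∧ ∃ x ∈ X, G.Adjacent x y

/-- Induced subgraph on a vertex set `S`. -/
def induce (S : Finset G.V) : Multigraph where
  V := {v // v ∈ S}
  fintypeV := inferInstance
  decEqV := inferInstance
  E := {e : G.E // (G.ends e).1 ∈ S ∧ (G.ends e).2 ∈ S}
  fintypeE := inferInstance
  decEqE := inferInstance
  ends := fun e => (⟨(G.ends e.1).1, e.2.1⟩, ⟨(G.ends e.1).2, e.2.2⟩)
  loopless := fun e h => G.loopless e.1 (congrArg Subtype.val h)

/-- The relation identifying the two ends of each edge in `F`. -/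
def contractRel (F : Set G.E) (x y : G.V) : Prop :=
  ∃ e ∈ F, G.ends e = (x, y) ∨ G.ends e = (y, x)

/-- Contraction of a set `F` of edges: identify endpoints of edges of `F`
(via the equivalence closure), delete the edges of `F` and all resulting loops. -/
noncomputable def contractEdges (F : Set G.E) : Multigraph := by
  classical
  exact
    { V := Quot (G.contractRel F)
      fintypeV := Fintype.ofSurjective (Quot.mk _) (fun q => Quot.inductionOn q fun a => ⟨a, rfl⟩)
      decEqV := Classical.decEq _
      E := {e : G.E // e ∉ F ∧
            Quot.mk (G.contractRel F) (G.ends e).1 ≠ Quot.mk (G.contractRel F) (G.ends e).2}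
      fintypeE := Subtype.fintype _
      decEqE := Classical.decEq _
      ends := fun e => (Quot.mk _ (G.ends e.1).1, Quot.mk _ (G.ends e.1).2)
      loopless := fun e => e.2.2 }

end Multigraph

/-- A subgraph of a multigraph. -/
structure Multigraph.Subgraph (G : Multigraph) where
  verts : Finset G.V
  edges : Finset G.E
  ends_mem : ∀ e ∈ edges, (G.ends e).1 ∈ verts ∧ (G.ends e).2 ∈ verts

namespace Multigraph

/-- A subgraph as a multigraph in its own right. -/
def Subgraph.toMultigraph {G : Multigraph} (H : G.Subgraph) : Multigraph where
  V := {v // v ∈ H.verts}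
  fintypeV := inferInstance
  decEqV := inferInstance
  E := {e // e ∈ H.edges}
  fintypeE := inferInstance
  decEqE := inferInstance
  ends := fun e => (⟨(G.ends e.1).1, (H.ends_mem e.1 e.2).1⟩, ⟨(G.ends e.1).2, (H.ends_mem e.1 e.2).2⟩)
  loopless := fun e h => G.loopless e.1 (congrArg Subtype.val h)

/-- `G` is `⟨ℤ₃⟩`-reduced: it has no `ℤ₃`-connected subgraph with at least two vertices. -/
def Z3Reduced (G : Multigraph) : Prop :=
  ∀ H : G.Subgraph, H.toMultigraph.Z3Connected → H.verts.card ≤ 1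

/-- The contraction `G/H` of a subgraph. -/
noncomputable def contractSubgraph (G : Multigraph) (H : G.Subgraph) : Multigraph :=
  G.contractEdges {e | e ∈ H.edges}

/-- The `⟨ℤ₃⟩`-reduction of `G`: contract (the edges of) all maximal `ℤ₃`-connected
subgraphs of `G`. -/
noncomputable def reduction (G : Multigraph) : Multigraph :=
  G.contractEdges {e | ∃ H : G.Subgraph, H.toMultigraph.Z3Connected ∧ e ∈ H.edges}

end Multigraph

/-- `r(n)`: the maximum number of edges of a `⟨ℤ₃⟩`-reduced graph on `n` vertices. -/
noncomputable def edgeMaxReduced (n : ℕ) : ℕ :=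
  sSup {m : ℕ | ∃ G : Multigraph, G.Z3Reduced ∧ Fintype.card G.V = n ∧ Fintype.card G.E = m}

/-- The complete graph `K_n`. -/
def completeK (n : ℕ) : Multigraph where
  V := Fin n
  fintypeV := inferInstance
  decEqV := inferInstance
  E := {p : Fin n × Fin n // p.1 < p.2}
  fintypeE := inferInstance
  decEqE := inferInstance
  ends := fun p => p.1
  loopless := fun p => Fin.ne_of_lt p.2

private theorem fin_succ_ne {n : ℕ} (hn : 2 ≤ n) (i : Fin n)
    (hv : (i : ℕ) = ((i : ℕ) + 1) % n) : False := by
  have hi := i.isLt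
  by_cases hlt : (i : ℕ) + 1 < n
  · rw [Nat.mod_eq_of_lt hlt] at hv; omega
  · have he : (i : ℕ) + 1 = n := by omega
    rw [he, Nat.mod_self] at hv; omega

/-- The cycle `C_n` (for `n ≥ 2`); `C_2` is a digon. -/
def cycleGraph (n : ℕ) (hn : 2 ≤ n) : Multigraph where
  V := Fin n
  fintypeV := inferInstance
  decEqV := inferInstance
  E := Fin n
  fintypeE := inferInstance
  decEqE := inferInstance
  ends := fun i => (i, ⟨((i : ℕ) + 1) % n, Nat.mod_lt _ (by omega)⟩)
  loopless := fun i h => fin_succ_ne hn i (congrArg Fin.val h)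

/-- The wheel `W_n` (for `n ≥ 2`): an `n`-cycle on `some 0, …, some (n-1)` together
with a center `none` joined to every vertex of the cycle. -/
def wheelGraph (n : ℕ) (hn : 2 ≤ n) : Multigraph where
  V := Option (Fin n)
  fintypeV := inferInstance
  decEqV := inferInstance
  E := Fin n ⊕ Fin n
  fintypeE := inferInstance
  decEqE := inferInstance
  ends := fun e => match e with
    | .inl i => (some i, some ⟨((i : ℕ) + 1) % n, Nat.mod_lt _ (by omega)⟩)
    | .inr i => (none, some i)
  loopless := by
    rintro (i | i) h
    · exact fin_succ_ne hn i (congrArg Fin.val (Option.some_injective _ h))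
    · exact Option.some_ne_none i h.symm


section Aux

open Multigraph
open Fin.NatCast

/-- From a nowhere-zero `ZMod 3` valuation of the edges we get an orientation whose
degree-difference at each vertex is the boundary of the valuation. -/
lemma flow_orient (G : Multigraph) (f : G.E → ZMod 3) (hf : ∀ e, f e ≠ 0) (v : G.V) :
    ((G.outDeg (fun e => decide (f e = 1)) v : ZMod 3) -
      (G.inDeg (fun e => decide (f e = 1)) v : ZMod 3))
      = ∑ e : G.E, ((if (G.ends e).1 = v then f e else 0) -
          (if (G.ends e).2 = v then f e else 0)) := by
  classical
  rw [Multigraph.outDeg, Multigraph.inDeg, Finset.card_filter, Finset.card_filter]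
  push_cast
  rw [← Finset.sum_sub_distrib]
  apply Finset.sum_congr rfl
  intro e _
  have h2 : f e = 1 ∨ f e = 2 := by
    have h := hf e; revert h; generalize f e = t; revert t; decide
  unfold Multigraph.tail Multigraph.head
  beta_reduce
  rcases h2 with h | h
  · have hd : decide (f e = 1) = true := by rw [h]; rfl
    rw [hd, h]
    simp
  · have hd : decide (f e = 1) = false := by rw [h]; rfl
    rw [hd, h]
    simp only [Bool.false_eq_true, if_false]
    split_ifs <;> decide

/-- The auxiliary sequence of rim-path values. -/
def zseq (n : ℕ) [NeZero n] (c : Fin n → ZMod 3) (j : Fin n) : ℕ → ZMod 3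
  | 0 => if c j = 0 then 1 else c j
  | m + 1 => if zseq n c j m + c (j + (↑(m + 1) : Fin n)) = 1 then 2 else 1

lemma zseq_ne_zero (n : ℕ) [NeZero n] (c : Fin n → ZMod 3) (j : Fin n) (m : ℕ) :
    zseq n c j m ≠ 0 := by
  cases m with
  | zero =>
    simp only [zseq]
    split_ifs with h
    · decide
    · exact h
  | succ m =>
    simp only [zseq]
    split_ifs <;> decide

lemma zseq_step (n : ℕ) [NeZero n] (c : Fin n → ZMod 3) (j : Fin n) (m : ℕ) :
    zseq n c j (m + 1) ≠ zseq n c j m + c (j + (↑(m + 1) : Fin n)) := by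
  conv_lhs => rw [zseq]
  split_ifs with h
  · rw [h]; decide
  · exact fun hcon => h hcon.symm

lemma zseq_all_zero (n : ℕ) [NeZero n] (c : Fin n → ZMod 3) (j : Fin n)
    (hc : ∀ i, c i = 0) (m : ℕ) : zseq n c j m = if Even m then 1 else 2 := by
  induction m with
  | zero => simp [zseq, hc]
  | succ m ih =>
    rw [zseq, ih, hc]
    rcases Nat.even_or_odd m with h | h
    · simp [h, Nat.even_add_one]
    · have h' : ¬ Even m := Nat.not_even_iff_odd.mpr h
      simp [h', Nat.even_add_one]

lemma fin_val_one (n : ℕ) (hn : 2 ≤ n) [NeZero n] : ((1 : Fin n) : ℕ) = 1 := by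
  rw [Fin.val_one']
  exact Nat.mod_eq_of_lt (by omega)

lemma fin_sub_one_val (n : ℕ) (hn : 2 ≤ n) [NeZero n] (a : Fin n) (ha : a ≠ 0) :
    ((a - 1 : Fin n) : ℕ) = (a : ℕ) - 1 := by
  rw [Fin.sub_def]
  simp only [fin_val_one n hn]
  have h1 : 1 ≤ (a : ℕ) := by
    rcases Nat.eq_zero_or_pos (a : ℕ) with h | h
    · exact absurd (Fin.ext h) ha
    · exact h
  have h2 : (a : ℕ) < n := a.isLt
  have h3 : n - 1 + (a : ℕ) = ((a : ℕ) - 1) + n := by omega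
  rw [h3, Nat.add_mod_right]
  exact Nat.mod_eq_of_lt (by omega)

lemma fin_neg_one_val (n : ℕ) (hn : 2 ≤ n) [NeZero n] :
    ((0 - 1 : Fin n) : ℕ) = n - 1 := by
  rw [Fin.sub_def]
  simp only [fin_val_one n hn, Fin.val_zero, Nat.add_zero]
  exact Nat.mod_eq_of_lt (by omega)

lemma fin_mk_succ (n : ℕ) (hn : 2 ≤ n) [NeZero n] (i : Fin n) (h : ((i : ℕ) + 1) % n < n) :
    (⟨((i : ℕ) + 1) % n, h⟩ : Fin n) = i + 1 := by
  rw [Fin.add_def]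
  exact Fin.ext (by simp [fin_val_one n hn])

end Aux

/-- Every even wheel `W_{2k}` (`k ≥ 1`) is `ℤ₃`-connected. -/
theorem evenWheel_z3Connected (k : ℕ) (hk : 1 ≤ k) :
    (wheelGraph (2 * k) (by omega)).Z3Connected := by
  classical
  intro b hb
  set n := 2 * k with hndef
  have hn : 2 ≤ n := by omega
  haveI : NeZero n := ⟨by omega⟩
  set c : Fin n → ZMod 3 := fun i => b (some i) with hc
  obtain ⟨j, hj⟩ : ∃ j : Fin n, c j = 0 → ∀ i, c i = 0 := by
    by_cases hex : ∃ j, c j ≠ 0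
    · obtain ⟨j, hj⟩ := hex; exact ⟨j, fun h => absurd h hj⟩
    · push_neg at hex; exact ⟨⟨0, by omega⟩, fun _ => hex⟩
  set z := zseq n c j with hzdef
  set y : Fin n → ZMod 3 := fun i => z ((i - j : Fin n) : ℕ) with hy
  have hy0 : ∀ i, y i ≠ 0 := fun i => zseq_ne_zero n c j _
  -- the cyclic step constraint
  have hcon : ∀ i : Fin n, y i ≠ y (i - 1) + c i := by
    intro i
    by_cases hij : i = j
    · -- closing constraint
      rw [hij]
      have h1 : y j = z 0 := by
        simp only [hy]; rw [sub_self]; rfl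
      have h2 : y (j - 1) = z (n - 1) := by
        simp only [hy]
        congr 1
        rw [sub_right_comm, sub_self]
        exact fin_neg_one_val n hn
      rw [h1, h2]
      by_cases h0 : c j = 0
      · -- all rim values zero; parity argument
        have hall := hj h0
        rw [hzdef, zseq_all_zero n c j hall, zseq_all_zero n c j hall, hall j]
        have hodd : ¬ Even (n - 1) := by
          intro h
          obtain ⟨t, ht⟩ := h
          omega
        rw [if_pos (Even.zero : Even 0), if_neg hodd]
        decide
      · -- z 0 = c j, and z (n-1) ≠ 0
        have h3 : z 0 = c j := by rw [hzdef]; simp [zseq, h0]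
        rw [h3]
        intro hcontra
        apply zseq_ne_zero n c j (n - 1)
        have h4 : z (n - 1) + c j = 0 + c j := by
          rw [zero_add]; exact hcontra.symm
        exact add_right_cancel h4
    · -- interior step
      have hij' : (i - j : Fin n) ≠ 0 := sub_ne_zero.mpr hij
      have hm1 : 1 ≤ ((i - j : Fin n) : ℕ) := by
        rcases Nat.eq_zero_or_pos ((i - j : Fin n) : ℕ) with h | h
        · exact absurd (Fin.ext h) hij'
        · exact h
      have hstep := zseq_step n c j (((i - j : Fin n) : ℕ) - 1)
      rw [show (((i - j : Fin n) : ℕ) - 1) + 1 = ((i - j : Fin n) : ℕ) by omega] at hstep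
      rw [Fin.cast_val_eq_self, add_sub_cancel] at hstep
      have hyi1 : y (i - 1) = z (((i - j : Fin n) : ℕ) - 1) := by
        simp only [hy]
        congr 1
        rw [sub_right_comm]
        exact fin_sub_one_val n hn _ hij'
      have hyi : y i = z ((i - j : Fin n) : ℕ) := rfl
      rw [hyi, hyi1]
      exact hstep
  set x : Fin n → ZMod 3 := fun i => y i - y (i - 1) - c i with hx
  have hx0 : ∀ i, x i ≠ 0 := by
    intro i h
    apply hcon i
    have h' : y i - y (i - 1) - c i = 0 := h
    linear_combination h'
  set f : Fin n ⊕ Fin n → ZMod 3 := Sum.elim y x with hfdef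
  have hfne : ∀ e : (wheelGraph n hn).E, f e ≠ 0 := by
    rintro (i | i)
    · exact hy0 i
    · exact hx0 i
  refine ⟨fun e => decide (f e = 1), ?_⟩
  intro v
  rw [flow_orient (wheelGraph n hn) f hfne v]
  show (∑ e : Fin n ⊕ Fin n, ((if ((wheelGraph n hn).ends e).1 = v then f e else 0) -
      (if ((wheelGraph n hn).ends e).2 = v then f e else 0))) = b v
  rw [Fintype.sum_sum_type]
  have hb' : b none + ∑ i : Fin n, b (some i) = 0 := by
    exact (Fintype.sum_option (α := Fin n) b).symm.trans hb
  match v with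
  | none =>
    have h1 : ∀ i : Fin n,
        ((if ((wheelGraph n hn).ends (.inl i)).1 = none then f (.inl i) else 0) -
         (if ((wheelGraph n hn).ends (.inl i)).2 = none then f (.inl i) else 0)) = 0 := by
      intro i; simp [wheelGraph]
    have h2 : ∀ i : Fin n,
        ((if ((wheelGraph n hn).ends (.inr i)).1 = none then f (.inr i) else 0) -
         (if ((wheelGraph n hn).ends (.inr i)).2 = none then f (.inr i) else 0)) = x i := by
      intro i; simp [wheelGraph, hfdef]
    refine Eq.trans (?_ : _ = ∑ i : Fin n, (0 : ZMod 3) + ∑ i : Fin n, x i) ?_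
    · exact congrArg₂ HAdd.hAdd (Finset.sum_congr rfl (fun i _ => by convert h1 i)) (Finset.sum_congr rfl (fun i _ => by convert h2 i))
    rw [Finset.sum_const_zero, zero_add]
    have hsum : ∑ i : Fin n, x i = - ∑ i : Fin n, c i := by
      simp only [hx]
      rw [Finset.sum_sub_distrib, Finset.sum_sub_distrib]
      have he : ∑ i : Fin n, y (i - 1) = ∑ i : Fin n, y i :=
        Fintype.sum_equiv (Equiv.subRight (1 : Fin n)) _ _ (fun i => rfl)
      rw [he, sub_self, zero_sub]
    rw [hsum]
    simp only [hc]
    linear_combination -hb'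
  | some a =>
    have h1 : ∀ i : Fin n,
        ((if ((wheelGraph n hn).ends (.inl i)).1 = some a then f (.inl i) else 0) -
         (if ((wheelGraph n hn).ends (.inl i)).2 = some a then f (.inl i) else 0)) =
        ((if i = a then y i else 0) - (if i = a - 1 then y i else 0)) := by
      intro i
      have he2 : ((wheelGraph n hn).ends (.inl i)).2 = some (i + 1) := by
        show some _ = some (i + 1)
        rw [fin_mk_succ n hn i]
      have he1 : ((wheelGraph n hn).ends (.inl i)).1 = some i := rfl
      have hiff : (i + 1 = a) ↔ (i = a - 1) := eq_sub_iff_add_eq.symm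
      have e1 : (if ((wheelGraph n hn).ends (.inl i)).1 = some a then f (.inl i) else 0)
          = (if i = a then y i else 0) := by
        rw [he1]
        by_cases h : i = a
        · erw [if_pos (congrArg some h), if_pos h]; rfl
        · erw [if_neg (fun hcc => h (Option.some_inj.mp hcc)), if_neg h]
      have e2 : (if ((wheelGraph n hn).ends (.inl i)).2 = some a then f (.inl i) else 0)
          = (if i = a - 1 then y i else 0) := by
        rw [he2]
        by_cases h : i = a - 1
        · erw [if_pos (congrArg some (hiff.mpr h)), if_pos h]; rfl
        · erw [if_neg (fun hcc => h (hiff.mp (Option.some_inj.mp hcc))), if_neg h]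
      rw [e1, e2]
    have h2 : ∀ i : Fin n,
        ((if ((wheelGraph n hn).ends (.inr i)).1 = some a then f (.inr i) else 0) -
         (if ((wheelGraph n hn).ends (.inr i)).2 = some a then f (.inr i) else 0)) =
        (0 - (if i = a then x i else 0)) := by
      intro i
      simp [wheelGraph, hfdef]
    refine Eq.trans (?_ : _ = ∑ i : Fin n, ((if i = a then y i else 0) - (if i = a - 1 then y i else 0)) + ∑ i : Fin n, (0 - (if i = a then x i else 0))) ?_
    · exact congrArg₂ HAdd.hAdd (Finset.sum_congr rfl (fun i _ => by convert h1 i)) (Finset.sum_congr rfl (fun i _ => by convert h2 i))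
    rw [Finset.sum_sub_distrib, Finset.sum_sub_distrib]
    rw [Finset.sum_ite_eq' Finset.univ a y, Finset.sum_ite_eq' Finset.univ (a - 1) y,
      Finset.sum_ite_eq' Finset.univ a x]
    simp only [Finset.mem_univ, if_true, Finset.sum_const_zero]
    show y a - y (a - 1) + (0 - x a) = b (some a)
    have hxa : x a = y a - y (a - 1) - c a := rfl
    have hca : c a = b (some a) := rfl
    rw [hxa, ← hca]
    ring
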